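/- Define Γ(t,s) = (1/224)·{ −7·[ (3t − s·t + 3s)·log(2s² − 3s + 9) + 2·(s+3)·(t+3)·log(s+3) − 8·s·t·log t + 2·(2s+3)·(2t+3)·log(2t+3) ] − 6√7·(s·t + s + t − 6)·arctan((3 − 4s)/(3√7)) }, where log is the natural logarithm of the absolute value. Then for all (t,s) with s < −3 and −3/2 < t < 0: (i) ∂²Γ/∂s² = −s·(s−t)/(4·(s+3)·((2/3)s² − s + 3)); (ii) ∂²Γ/∂t² = (s−t)/(4·((2/3)t² + t)); (iii) ∂Γ/∂s − ∂Γ/∂t + (s−t)·∂²Γ/∂s∂t = 0. -/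

import Mathlib

/-- The symplectic potential `Γ(t,s)` of the Ricci-flat orthotoric metric on
`tot K_{WP[112]}` in the orthotoric coordinates `(t,s)`.
`Real.log` is the natural logarithm of the absolute value. -/
noncomputable def Gam (t s : ℝ) : ℝ :=
  (1 / 224) *
    (-7 * ((3 * t - s * t + 3 * s) * Real.log (2 * s ^ 2 - 3 * s + 9)
        + 2 * (s + 3) * (t + 3) * Real.log (s + 3)
        - 8 * s * t * Real.log t
        + 2 * (2 * s + 3) * (2 * t + 3) * Real.log (2 * t + 3))
      - 6 * Real.sqrt 7 * (s * t + s + t - 6) *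
          Real.arctan ((3 - 4 * s) / (3 * Real.sqrt 7)))

open Real Filter

private lemma hQpos (s : ℝ) : 0 < 2*s^2 - 3*s + 9 := by nlinarith [sq_nonneg (4*s - 3)]

private lemma hd_aff (a b x : ℝ) : HasDerivAt (fun y : ℝ => a * y + b) a x := by
  simpa using ((hasDerivAt_id x).const_mul a).add_const b

private lemma hd_quad (a b c x : ℝ) :
    HasDerivAt (fun y : ℝ => a * y ^ 2 + b * y + c) (2 * a * x + b) x := by
  have h := (((hasDerivAt_pow 2 x).const_mul a).add ((hasDerivAt_id x).const_mul b)).add_const c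
  refine (h.congr_of_eventuallyEq (Eventually.of_forall fun y => ?_)).congr_deriv ?_
  · simp
  · simp; ring

private lemma hdQ (x : ℝ) : HasDerivAt (fun y : ℝ => 2*y^2 - 3*y + 9) (4*x - 3) x := by
  have h := hd_quad 2 (-3) 9 x
  refine (h.congr_of_eventuallyEq (Eventually.of_forall fun y => by ring)).congr_deriv ?_
  ring

private lemma hd_lin (a x : ℝ) : HasDerivAt (fun y : ℝ => a * y) a x := by
  simpa using (hasDerivAt_id x).const_mul a

private lemma hd_log (x : ℝ) (hx : x ≠ 0) : HasDerivAt (fun y : ℝ => Real.log y) (1/x) x := by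
  simpa [one_div] using Real.hasDerivAt_log hx

private lemma hdp3 (x : ℝ) : HasDerivAt (fun y : ℝ => y + 3) 1 x :=
  (hasDerivAt_id x).add_const 3

private lemma hA7 (s : ℝ) :
    HasDerivAt (fun x : ℝ => Real.sqrt 7 * Real.arctan ((3 - 4*x)/(3*Real.sqrt 7)))
      (-(21 / (2 * (2*s^2 - 3*s + 9)))) s := by
  have h7 : (0:ℝ) < Real.sqrt 7 := Real.sqrt_pos.mpr (by norm_num)
  have hinner : HasDerivAt (fun x : ℝ => (3 - 4*x)/(3*Real.sqrt 7)) (-4/(3*Real.sqrt 7)) s := by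
    have h := (hd_aff (-4) 3 s).div_const (3*Real.sqrt 7)
    exact h.congr_of_eventuallyEq (Eventually.of_forall fun y => by ring)
  have h := hinner.arctan.const_mul (Real.sqrt 7)
  refine h.congr_deriv ?_
  have e2 : ((3 - 4*s)/(3*Real.sqrt 7))^2 = (3 - 4*s)^2 / 63 := by
    rw [div_pow, mul_pow, Real.sq_sqrt (by norm_num : (0:ℝ) ≤ 7)]
    norm_num
  rw [e2]
  have hne : (1 : ℝ) + (3 - 4*s)^2/63 ≠ 0 := by positivity
  have hQ := (hQpos s).ne'
  field_simp
  have hQ' : s*(s*2-3)+9 ≠ 0 := by nlinarith [hQpos s]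
  rw [neg_inj, eq_div_iff hQ']
  ring

/-- `∂Γ/∂s`. -/
noncomputable def Gs (t s : ℝ) : ℝ :=
  (1/224) * (-7*((3 - t)*Real.log (2*s^2 - 3*s + 9) + 2*(t + 3)*Real.log (s + 3)
      - 8*t*Real.log t + 4*(2*t + 3)*Real.log (2*t + 3))
    - 6*(t + 1)*(Real.sqrt 7 * Real.arctan ((3 - 4*s)/(3*Real.sqrt 7)))
    + ((28*t - 84)*s^2 + (126 - 42*t)*s + (126*t - 378))/(2*s^2 - 3*s + 9) - 14*(t + 3))

/-- `∂Γ/∂t`. -/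
noncomputable def Gt' (t s : ℝ) : ℝ :=
  (1/224) * (-7*((3 - s)*Real.log (2*s^2 - 3*s + 9) + (2*s + 6)*Real.log (s + 3)
      - 8*s*Real.log t + (8*s + 12)*Real.log (2*t + 3) + 12)
    - 6*(s + 1)*(Real.sqrt 7 * Real.arctan ((3 - 4*s)/(3*Real.sqrt 7))))

/-- `∂²Γ/∂s∂t`. -/
noncomputable def Gts (t s : ℝ) : ℝ :=
  (1/224) * (-7*(-(Real.log (2*s^2 - 3*s + 9)) + 2*Real.log (s + 3)
      - 8*Real.log t + 8*Real.log (2*t + 3) + ((3 - s)*(4*s - 3))/(2*s^2 - 3*s + 9) + 2)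
    - 6*(Real.sqrt 7 * Real.arctan ((3 - 4*s)/(3*Real.sqrt 7)))
    + (63*(s + 1))/(2*s^2 - 3*s + 9))

private lemma hGs (t s : ℝ) (hs3 : s + 3 ≠ 0) :
    HasDerivAt (fun x => Gam t x) (Gs t s) s := by
  have hQ : (2*s^2 - 3*s + 9) ≠ 0 := (hQpos s).ne'
  have h1 := (hd_aff (3 - t) (3*t) s).mul ((hdQ s).log hQ)
  have h2 := (hd_aff (2*(t + 3)) (6*(t + 3)) s).mul ((hdp3 s).log hs3)
  have h3 := hd_lin (8*t*Real.log t) s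
  have h4 := (hd_aff (4*(2*t + 3)) (6*(2*t + 3)) s).mul_const (Real.log (2*t + 3))
  have h5 := ((hd_aff (t + 1) (t - 6) s).const_mul 6).mul (hA7 s)
  have H := (((((h1.add h2).sub h3).add h4).const_mul (-7)).sub h5).const_mul (1/224)
  refine (H.congr_of_eventuallyEq (Eventually.of_forall fun x => ?_)).congr_deriv ?_
  · unfold Gam; simp only [Pi.mul_apply, Pi.div_apply, Pi.add_apply, Pi.sub_apply]; ring
  · unfold Gs; field_simp; ring

private lemma hGt (t s : ℝ) (ht : t ≠ 0) (ht2 : 2*t + 3 ≠ 0) :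
    HasDerivAt (fun x => Gam x s) (Gt' t s) t := by
  have m1 := (hd_aff (3 - s) (3*s) t).mul_const (Real.log (2*s^2 - 3*s + 9))
  have m2 := (hd_aff (2*(s + 3)) (6*(s + 3)) t).mul_const (Real.log (s + 3))
  have m3 := (Real.hasDerivAt_mul_log ht).const_mul (8*s)
  have m4 := ((hd_aff 2 3 t).mul ((hd_aff 2 3 t).log ht2)).const_mul (2*(2*s + 3))
  have m5 := ((hd_aff (s + 1) (s - 6) t).const_mul 6).mul_const
      (Real.sqrt 7 * Real.arctan ((3 - 4*s)/(3*Real.sqrt 7)))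
  have H := (((((m1.add m2).sub m3).add m4).const_mul (-7)).sub m5).const_mul (1/224)
  refine (H.congr_of_eventuallyEq (Eventually.of_forall fun x => ?_)).congr_deriv ?_
  · unfold Gam; simp only [Pi.mul_apply, Pi.div_apply, Pi.add_apply, Pi.sub_apply]; ring
  · unfold Gt'; field_simp; ring

private lemma hGss (t s : ℝ) (hs3 : s + 3 ≠ 0) :
    HasDerivAt (fun x => Gs t x)
      (-s * (s - t) / (4 * (s + 3) * ((2 / 3) * s ^ 2 - s + 3))) s := by
  have hQ : (2*s^2 - 3*s + 9) ≠ 0 := (hQpos s).ne'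
  have hQ3 : (2/3)*s^2 - s + 3 ≠ 0 := by nlinarith [hQpos s]
  have g1 := ((hdQ s).log hQ).const_mul (3 - t)
  have g2 := ((hdp3 s).log hs3).const_mul (2*(t + 3))
  have g3 := hasDerivAt_const s (8*t*Real.log t)
  have g4 := hasDerivAt_const s (4*(2*t + 3)*Real.log (2*t + 3))
  have g5 := (hA7 s).const_mul (6*(t + 1))
  have g6 := (hd_quad (28*t - 84) (126 - 42*t) (126*t - 378) s).div (hdQ s) hQ
  have H := ((((((g1.add g2).sub g3).add g4).const_mul (-7)).sub g5).add g6).sub_const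
      (14*(t + 3)) |>.const_mul (1/224)
  refine (H.congr_of_eventuallyEq (Eventually.of_forall fun x => ?_)).congr_deriv ?_
  · unfold Gs; simp only [Pi.mul_apply, Pi.div_apply, Pi.add_apply, Pi.sub_apply]
  · rw [eq_div_iff (mul_ne_zero (mul_ne_zero (by norm_num) hs3) hQ3)]
    have hQ' : s*(s*2-3)+9 ≠ 0 := by nlinarith [hQpos s]
    field_simp [hQ, hs3]
    ring

private lemma hGts (t s : ℝ) (hs3 : s + 3 ≠ 0) :
    HasDerivAt (fun x => Gt' t x) (Gts t s) s := by
  have hQ : (2*s^2 - 3*s + 9) ≠ 0 := (hQpos s).ne'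
  have g1 := (hd_aff (-1) 3 s).mul ((hdQ s).log hQ)
  have g2 := (hd_aff 2 6 s).mul ((hdp3 s).log hs3)
  have g3 := hd_lin (8*Real.log t) s
  have g4 := (hd_aff 8 12 s).mul_const (Real.log (2*t + 3))
  have g5 := ((hd_aff 1 1 s).const_mul 6).mul (hA7 s)
  have H := ((((((g1.add g2).sub g3).add g4).add_const 12).const_mul (-7)).sub g5).const_mul (1/224)
  refine (H.congr_of_eventuallyEq (Eventually.of_forall fun x => ?_)).congr_deriv ?_
  · unfold Gt'; simp only [Pi.mul_apply, Pi.div_apply, Pi.add_apply, Pi.sub_apply]; ring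
  · unfold Gts; field_simp [hQ, hs3]; ring

private lemma hGtt (t s : ℝ) (ht : t ≠ 0) (ht2 : 2*t + 3 ≠ 0) :
    HasDerivAt (fun x => Gt' x s) ((s - t) / (4 * ((2 / 3) * t ^ 2 + t))) t := by
  have hden : (2/3)*t^2 + t ≠ 0 := by
    intro h
    exact mul_ne_zero ht ht2 (by linear_combination 3*h)
  have n1 := hasDerivAt_const t ((3 - s)*Real.log (2*s^2 - 3*s + 9))
  have n2 := hasDerivAt_const t ((2*s + 6)*Real.log (s + 3))
  have n3 := (hd_log t ht).const_mul (8*s)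
  have n4 := ((hd_aff 2 3 t).log ht2).const_mul (8*s + 12)
  have H := (((((((n1.add n2).sub n3).add n4).add_const 12).const_mul (-7)).sub_const
      (6*(s + 1)*(Real.sqrt 7 * Real.arctan ((3 - 4*s)/(3*Real.sqrt 7))))).const_mul (1/224))
  refine (H.congr_of_eventuallyEq (Eventually.of_forall fun x => ?_)).congr_deriv ?_
  · unfold Gt'; simp only [Pi.mul_apply, Pi.div_apply, Pi.add_apply, Pi.sub_apply]
  · rw [eq_div_iff (mul_ne_zero (by norm_num) hden)]
    have ht2' : t*2+3 ≠ 0 := by intro h; exact ht2 (by linarith)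
    field_simp [ht, ht2]
    ring

/-- For all `(t,s)` with `s < −3`, `−3/2 < t < 0`:
(i)   `∂²Γ/∂s² = −s(s−t)/(4(s+3)((2/3)s² − s + 3))`;
(ii)  `∂²Γ/∂t² = (s−t)/(4((2/3)t² + t))`;
(iii) `∂Γ/∂s − ∂Γ/∂t + (s−t)·∂²Γ/∂s∂t = 0`. -/
theorem stmt_11 (t s : ℝ) (hs : s < -3) (ht₁ : -3 / 2 < t) (ht₂ : t < 0) :
    deriv (fun s' => deriv (fun s'' => Gam t s'') s') s =
      -s * (s - t) / (4 * (s + 3) * ((2 / 3) * s ^ 2 - s + 3)) ∧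
    deriv (fun t' => deriv (fun t'' => Gam t'' s) t') t =
      (s - t) / (4 * ((2 / 3) * t ^ 2 + t)) ∧
    deriv (fun s' => Gam t s') s - deriv (fun t' => Gam t' s) t
      + (s - t) * deriv (fun s' => deriv (fun t' => Gam t' s') t) s = 0 := by
  have hs3 : s + 3 ≠ 0 := by intro h; linarith
  have ht : t ≠ 0 := ne_of_lt ht₂
  have ht3 : 2*t + 3 ≠ 0 := by intro h; linarith
  have hQ : (2*s^2 - 3*s + 9) ≠ 0 := (hQpos s).ne'
  refine ⟨?_, ?_, ?_⟩
  · have hev : ∀ᶠ x in nhds s, x + 3 ≠ 0 :=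
      (eventually_ne_nhds (show s ≠ -3 by intro h; rw [h] at hs; linarith)).mono
        (fun x hx h => hx (by linarith))
    have e1 : deriv (fun s' => deriv (fun s'' => Gam t s'') s') s
        = deriv (fun s' => Gs t s') s :=
      Filter.EventuallyEq.deriv_eq (hev.mono fun x hx => (hGs t x hx).deriv)
    rw [e1, (hGss t s hs3).deriv]
  · have hev1 : ∀ᶠ x in nhds t, x ≠ 0 := eventually_ne_nhds ht
    have hev2 : ∀ᶠ x in nhds t, 2*x + 3 ≠ 0 :=
      (eventually_ne_nhds (show t ≠ -(3/2) by intro h; rw [h] at ht₁; norm_num at ht₁)).mono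
        (fun x hx h => hx (by linarith))
    have e1 : deriv (fun t' => deriv (fun t'' => Gam t'' s) t') t
        = deriv (fun t' => Gt' t' s) t :=
      Filter.EventuallyEq.deriv_eq ((hev1.and hev2).mono fun x hx => (hGt x s hx.1 hx.2).deriv)
    rw [e1, (hGtt t s ht ht3).deriv]
  · have e1 : deriv (fun s' => Gam t s') s = Gs t s := (hGs t s hs3).deriv
    have e2 : deriv (fun t' => Gam t' s) t = Gt' t s := (hGt t s ht ht3).deriv
    have e3 : (fun s' => deriv (fun t' => Gam t' s') t) = fun s' => Gt' t s' :=
      funext fun s' => (hGt t s' ht ht3).deriv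
    rw [e1, e2, e3, (hGts t s hs3).deriv]
    unfold Gs Gt' Gts
    have hQ' : s*(2*s-3)+9 ≠ 0 := by nlinarith [hQpos s]
    field_simp
    ring
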